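/- For 0 < p < 1/N, the variance of the number T_{n,k} of open downward paths of length k satisfies Var(T_{n,k}) ≤ 2 (1 - Np)^{-1} E(T_{n,k}); for p = 1/N, Var(T_{n,k}) ≤ 2 (k+1) E(T_{n,k}); and for 1/N < p < 1, Var(T_{n,k}) ≤ 2 N^{k+1} p^{k+1} (Np - 1)^{-1} E(T_{n,k}). -/

import Mathlib

open MeasureTheory ProbabilityTheory
open scoped Classical

/-- The level-`j` vertices of the rooted `N`-ary tree, encoded as lists of directions read
from the vertex back up to the root (root = `[]`, children of `v` are `d :: v`,
the ancestor `i` levels above `v` is `v.drop i`). -/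
noncomputable def listsLen (N j : ℕ) : Finset (List (Fin N)) :=
  (Finset.univ : Finset (Fin j → Fin N)).image List.ofFn

/-- A downward path of length `k` in the depth-`n` tree is determined by its bottom vertex,
which can be any vertex at level `j` with `k ≤ j ≤ n`. -/
noncomputable def pathBottoms (N n k : ℕ) : Finset (List (Fin N)) :=
  (Finset.Icc k n).biUnion (listsLen N)

namespace Stmt10Aux

lemma mem_listsLen {N j : ℕ} {l : List (Fin N)} : l ∈ listsLen N j ↔ l.length = j := by
  simp only [listsLen, Finset.mem_image, Finset.mem_univ, true_and]
  constructor
  · rintro ⟨f, rfl⟩; simp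
  · intro h; subst h; exact ⟨l.get, List.ofFn_get l⟩

lemma card_listsLen (N j : ℕ) : (listsLen N j).card = N ^ j := by
  rw [listsLen, Finset.card_image_of_injective _ List.ofFn_injective, Finset.card_univ]
  simp [Fintype.card_fun]

lemma mem_pathBottoms {N n k : ℕ} {l : List (Fin N)} :
    l ∈ pathBottoms N n k ↔ k ≤ l.length ∧ l.length ≤ n := by
  simp only [pathBottoms, Finset.mem_biUnion, Finset.mem_Icc, mem_listsLen]
  constructor
  · rintro ⟨j, ⟨h1, h2⟩, rfl⟩; exact ⟨h1, h2⟩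
  · rintro ⟨h1, h2⟩; exact ⟨l.length, ⟨h1, h2⟩, rfl⟩

noncomputable def Sb {N : ℕ} (k : ℕ) (b : List (Fin N)) : Finset (List (Fin N)) :=
  (Finset.range (k+1)).image (fun i => b.drop i)

lemma mem_Sb {k N : ℕ} {b v : List (Fin N)} : v ∈ Sb k b ↔ ∃ i, i ≤ k ∧ b.drop i = v := by
  simp [Sb, Nat.lt_succ_iff]

lemma card_Sb {k N : ℕ} {b : List (Fin N)} (hb : k ≤ b.length) : (Sb k b).card = k + 1 := by
  rw [Sb, Finset.card_image_of_injOn, Finset.card_range]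
  intro i hi j hj h
  simp only [Finset.coe_range, Set.mem_Iio] at hi hj
  have := congrArg List.length h
  simp only [List.length_drop] at this
  omega

lemma card_Sb_le {k N : ℕ} (b : List (Fin N)) : (Sb k b).card ≤ k + 1 := by
  calc (Sb k b).card ≤ (Finset.range (k+1)).card := Finset.card_image_le
  _ = k + 1 := Finset.card_range _

lemma drop_eq_succ {N : ℕ} {b b' : List (Fin N)} {i j : ℕ} (h : b.drop i = b'.drop j) :
    b.drop (i+1) = b'.drop (j+1) := by
  have := congrArg (List.drop 1) h
  simpa [List.drop_drop, Nat.add_comm] using this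

lemma inter_eq {k N : ℕ} {b b' : List (Fin N)} (hb : k ≤ b.length) (hb' : k ≤ b'.length)
    (hle : b.length ≤ b'.length) :
    Sb k b ∩ Sb k b' =
      ((Finset.range (k+1)).filter
        (fun i => i + (b'.length - b.length) ≤ k ∧
          b.drop i = b'.drop (i + (b'.length - b.length)))).image (fun i => b.drop i) := by
  ext v
  simp only [Finset.mem_inter, mem_Sb, Finset.mem_image, Finset.mem_filter, Finset.mem_range,
    Nat.lt_succ_iff]
  constructor
  · rintro ⟨⟨i, hi, rfl⟩, ⟨j, hj, hji⟩⟩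
    have hlen := congrArg List.length hji
    simp only [List.length_drop] at hlen
    have hj' : j = i + (b'.length - b.length) := by omega
    exact ⟨i, ⟨hi, by omega, by rw [← hj']; exact hji.symm⟩, rfl⟩
  · rintro ⟨i, ⟨hi, hdk, hdrop⟩, rfl⟩
    exact ⟨⟨i, hi, rfl⟩, ⟨i + (b'.length - b.length), hdk, hdrop.symm⟩⟩

lemma card_inter_eq {k N : ℕ} {b b' : List (Fin N)} (hb : k ≤ b.length) (hb' : k ≤ b'.length)
    (hle : b.length ≤ b'.length) :
    (Sb k b ∩ Sb k b').card =
      ((Finset.range (k+1)).filter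
        (fun i => i + (b'.length - b.length) ≤ k ∧
          b.drop i = b'.drop (i + (b'.length - b.length)))).card := by
  rw [inter_eq hb hb' hle]
  apply Finset.card_image_of_injOn
  intro i hi j hj h
  simp only [Finset.coe_filter, Set.mem_setOf_eq, Finset.mem_range, Nat.lt_succ_iff] at hi hj
  have := congrArg List.length h
  simp only [List.length_drop] at this
  omega

lemma key_struct {k N : ℕ} {b b' : List (Fin N)} (hb : k ≤ b.length) (hb' : k ≤ b'.length)
    (hle : b.length ≤ b'.length) {m : ℕ}
    (hm : ((Finset.range (k+1)).filter
        (fun i => i + (b'.length - b.length) ≤ k ∧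
          b.drop i = b'.drop (i + (b'.length - b.length)))).card = m)
    (hm1 : 1 ≤ m) :
    ∃ i₀ : ℕ, i₀ + m ≤ k + 1 ∧ i₀ = b.length - (b'.length - (k + 1 - m)) ∧
      b = b.take i₀ ++ b'.drop (k + 1 - m) ∧
      ∀ c : Fin N, (b.take i₀).getLast? = some c → b'[k - m]? ≠ some c := by
  set d := b'.length - b.length with hd
  set P : ℕ → Prop := fun i => b.drop i = b'.drop (i + d) with hPdef
  set I := (Finset.range (k+1)).filter (fun i => i + d ≤ k ∧ P i) with hI
  have hne : I.Nonempty := Finset.card_pos.mp (by omega)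
  obtain ⟨i₁, hi₁⟩ := hne
  simp only [hI, Finset.mem_filter, Finset.mem_range, Nat.lt_succ_iff] at hi₁
  obtain ⟨hi₁k, hi₁d, hi₁P⟩ := hi₁
  have hdk : d ≤ k := by omega
  have hP : ∃ i, P i := ⟨i₁, hi₁P⟩
  set i₀ := Nat.find hP with hi₀def
  have hfind : P i₀ := Nat.find_spec hP
  have mono : ∀ i j, i ≤ j → P i → P j := by
    intro i j hij hPi
    induction j, hij using Nat.le_induction with
    | base => exact hPi
    | succ j hij ih =>
      have := drop_eq_succ ih
      simpa [hPdef, Nat.add_right_comm] using this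
  have hIeq : ∀ i, i ∈ I ↔ i₀ ≤ i ∧ i + d ≤ k := by
    intro i
    simp only [hI, Finset.mem_filter, Finset.mem_range, Nat.lt_succ_iff]
    constructor
    · rintro ⟨h1, h2, h3⟩; exact ⟨Nat.find_min' hP h3, h2⟩
    · rintro ⟨h1, h2⟩; exact ⟨by omega, h2, mono i₀ i h1 hfind⟩
  have hi₀le : i₀ ≤ i₁ := Nat.find_min' hP hi₁P
  have hIcc : I = Finset.Icc i₀ (k - d) := by
    ext i; rw [hIeq i, Finset.mem_Icc]; omega
  have hcard : m = k - d - i₀ + 1 := by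
    rw [← hm, hIcc, Nat.card_Icc]; omega
  have hi₀sum : i₀ + d + m = k + 1 := by omega
  have hi₀len : i₀ ≤ b.length := by omega
  have hkey : b.drop i₀ = b'.drop (k + 1 - m) := by
    have : i₀ + d = k + 1 - m := by omega
    rw [← this]; exact hfind
  refine ⟨i₀, by omega, by omega, ?_, ?_⟩
  · conv_lhs => rw [← List.take_append_drop i₀ b]
    rw [hkey]
  · intro c hc hc'
    have hi₀1 : 1 ≤ i₀ := by
      by_contra h
      have : i₀ = 0 := by omega
      rw [this] at hc; simp at hc
    have hmk : m ≤ k := by omega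
    have hnot : ¬ P (i₀ - 1) := Nat.find_min hP (by omega)
    have hlt1 : i₀ - 1 < b.length := by omega
    have hlt2 : k - m < b'.length := by omega
    have e1 : b.drop (i₀ - 1) = b[i₀ - 1] :: b.drop i₀ := by
      have h := List.drop_eq_getElem_cons hlt1
      rwa [show i₀ - 1 + 1 = i₀ by omega] at h
    have e2 : b'.drop (k - m) = b'[k - m] :: b'.drop (k + 1 - m) := by
      have h := List.drop_eq_getElem_cons hlt2
      rwa [show k - m + 1 = k + 1 - m by omega] at h
    have hcv : c = b[i₀ - 1] := by
      have h1 : (b.take i₀).getLast? = (b.take i₀)[i₀ - 1]? := by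
        rw [List.getLast?_eq_getElem?]
        congr 1
        rw [List.length_take]
        omega
      rw [h1] at hc
      rw [List.getElem?_take_of_lt (by omega)] at hc
      rw [List.getElem?_eq_getElem hlt1] at hc
      exact (Option.some_inj.mp hc).symm
    have hcv' : c = b'[k - m] := by
      rw [List.getElem?_eq_getElem hlt2] at hc'
      exact (Option.some_inj.mp hc').symm
    apply hnot
    show b.drop (i₀ - 1) = b'.drop ((i₀ - 1) + d)
    have : (i₀ - 1) + d = k - m := by omega
    rw [this, e1, e2, ← hcv, ← hcv', hkey]

lemma strip_aux {α : Type*} [DecidableEq α] {c : α} {u : List α} (h : u.getLast? ≠ some c)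
    (r : ℕ) :
    ((u ++ List.replicate r c).reverse.dropWhile (fun a => a = c)).reverse = u := by
  rw [List.reverse_append, List.reverse_replicate]
  have h1 : ∀ r' : ℕ, List.dropWhile (fun a => decide (a = c)) (List.replicate r' c ++ u.reverse)
      = List.dropWhile (fun a => decide (a = c)) u.reverse := by
    intro r'
    induction r' with
    | zero => simp
    | succ r' ih => simpa [List.replicate_succ, List.dropWhile_cons] using ih
  rw [h1]
  have h2 : List.dropWhile (fun a => decide (a = c)) u.reverse = u.reverse := by
    cases hrev : u.reverse with
    | nil => simp
    | cons a t =>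
      have ha : u.getLast? = some a := by
        rw [← List.head?_reverse, hrev]; rfl
      have hac : a ≠ c := fun e => h (by rw [ha, e])
      simp [List.dropWhile_cons, hac]
  rw [h2, List.reverse_reverse]

lemma strip {α : Type*} [DecidableEq α] {c : α} {u₁ u₂ : List α} {r₁ r₂ : ℕ}
    (h₁ : u₁.getLast? ≠ some c) (h₂ : u₂.getLast? ≠ some c)
    (he : u₁ ++ List.replicate r₁ c = u₂ ++ List.replicate r₂ c) : u₁ = u₂ := by
  have t1 := strip_aux h₁ r₁
  rw [he, strip_aux h₂ r₂] at t1
  exact t1.symm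

lemma count_one_sided {N n k : ℕ} (hN : 2 ≤ N) (m' : ℕ) (hm1 : 1 ≤ m') :
    (((pathBottoms N n k) ×ˢ (pathBottoms N n k)).filter
      (fun q => (Sb k q.1 ∩ Sb k q.2).card = m' ∧ q.1.length ≤ q.2.length)).card
    ≤ (pathBottoms N n k).card * N ^ (k + 1 - m') := by
  classical
  have hN0 : 0 < N := by omega
  have hstruct : ∀ q ∈ (((pathBottoms N n k) ×ˢ (pathBottoms N n k)).filter
      (fun q => (Sb k q.1 ∩ Sb k q.2).card = m' ∧ q.1.length ≤ q.2.length)),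
      (q.1.length - (q.2.length - (k + 1 - m'))) + m' ≤ k + 1 ∧
      q.1 = q.1.take (q.1.length - (q.2.length - (k + 1 - m'))) ++ q.2.drop (k + 1 - m') ∧
      (∀ c : Fin N, (q.1.take (q.1.length - (q.2.length - (k + 1 - m')))).getLast? = some c →
        q.2[k - m']? ≠ some c) ∧ k ≤ q.2.length := by
    intro q hq
    rw [Finset.mem_filter, Finset.mem_product] at hq
    obtain ⟨⟨hq1, hq2⟩, hcard, hlen⟩ := hq
    rw [mem_pathBottoms] at hq1 hq2
    rw [card_inter_eq hq1.1 hq2.1 hlen] at hcard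
    obtain ⟨i₀, hi₀m, hi₀eq, hsplit, hexact⟩ := key_struct hq1.1 hq2.1 hlen hcard hm1
    rw [← hi₀eq]
    exact ⟨hi₀m, hsplit, hexact, hq2.1⟩
  calc (((pathBottoms N n k) ×ˢ (pathBottoms N n k)).filter
      (fun q => (Sb k q.1 ∩ Sb k q.2).card = m' ∧ q.1.length ≤ q.2.length)).card
      ≤ ((pathBottoms N n k) ×ˢ (listsLen N (k + 1 - m'))).card := by
        apply Finset.card_le_card_of_injOn
          (fun q => (q.2, q.1.take (q.1.length - (q.2.length - (k + 1 - m'))) ++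
            List.replicate ((k + 1 - m') - (q.1.length - (q.2.length - (k + 1 - m'))))
              (q.2.getD (k - m') ⟨0, hN0⟩)))
        · -- maps to
          intro q hq
          have hs := hstruct q hq
          rw [Finset.mem_coe, Finset.mem_filter, Finset.mem_product] at hq
          simp only [Finset.mem_coe, Finset.mem_product]
          refine ⟨hq.1.2, ?_⟩
          rw [mem_listsLen, List.length_append, List.length_take, List.length_replicate]
          omega
        · -- injective
          intro q₁ hq₁ q₂ hq₂ heq
          simp only [Finset.mem_coe] at hq₁ hq₂
          have hs₁ := hstruct q₁ hq₁
          have hs₂ := hstruct q₂ hq₂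
          obtain ⟨heq2, heqw⟩ := Prod.mk.injEq .. ▸ heq
          -- q₁.2 = q₂.2
          have hb' : q₁.2 = q₂.2 := heq2
          -- exactness gives getLast? ≠ some c for the padding constant
          have hlast : ∀ (q : List (Fin N) × List (Fin N)),
              ((q.1.length - (q.2.length - (k + 1 - m'))) + m' ≤ k + 1) →
              (∀ c : Fin N, (q.1.take (q.1.length - (q.2.length - (k + 1 - m')))).getLast? = some c →
                q.2[k - m']? ≠ some c) → k ≤ q.2.length →
              (q.1.take (q.1.length - (q.2.length - (k + 1 - m')))).getLast?
                ≠ some (q.2.getD (k - m') ⟨0, hN0⟩) := by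
            intro q him hex hklen hcon
            have hne : q.1.take (q.1.length - (q.2.length - (k + 1 - m'))) ≠ [] := by
              intro h0; rw [h0] at hcon; simp at hcon
            have hi₀1 : 1 ≤ q.1.length - (q.2.length - (k + 1 - m')) := by
              rcases Nat.eq_zero_or_pos (q.1.length - (q.2.length - (k + 1 - m'))) with h | h
              · rw [h] at hcon; simp at hcon
              · omega
            have hmk : m' ≤ k := by omega
            have hklt : k - m' < q.2.length := by omega
            have : q.2[k - m']? = some (q.2.getD (k - m') ⟨0, hN0⟩) := by
              rw [List.getElem?_eq_getElem hklt, List.getD_eq_getElem _ _ hklt]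
            exact hex _ hcon this
          have h1 := hlast q₁ hs₁.1 hs₁.2.2.1 hs₁.2.2.2
          have h2 := hlast q₂ hs₂.1 hs₂.2.2.1 hs₂.2.2.2
          have e1 := hs₁.2.1
          have e2 := hs₂.2.1
          rw [hb'] at h1 heqw e1
          have hu := strip h1 h2 heqw
          have : q₁.1 = q₂.1 := by rw [e1, e2, hu]
          exact Prod.ext this hb'
  _ = (pathBottoms N n k).card * N ^ (k + 1 - m') := by
        rw [Finset.card_product, card_listsLen]

lemma count_pairs {N n k : ℕ} (hN : 2 ≤ N) (m' : ℕ) (hm1 : 1 ≤ m') :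
    (((pathBottoms N n k) ×ˢ (pathBottoms N n k)).filter
      (fun q => (Sb k q.1 ∩ Sb k q.2).card = m')).card
    ≤ 2 * ((pathBottoms N n k).card * N ^ (k + 1 - m')) := by
  classical
  have hsub : ((pathBottoms N n k) ×ˢ (pathBottoms N n k)).filter
      (fun q => (Sb k q.1 ∩ Sb k q.2).card = m') ⊆
      (((pathBottoms N n k) ×ˢ (pathBottoms N n k)).filter
        (fun q => (Sb k q.1 ∩ Sb k q.2).card = m' ∧ q.1.length ≤ q.2.length)) ∪
      (((pathBottoms N n k) ×ˢ (pathBottoms N n k)).filter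
        (fun q => (Sb k q.1 ∩ Sb k q.2).card = m' ∧ q.2.length ≤ q.1.length)) := by
    intro q hq
    rw [Finset.mem_filter] at hq
    rw [Finset.mem_union, Finset.mem_filter, Finset.mem_filter]
    rcases le_total q.1.length q.2.length with h | h
    · exact Or.inl ⟨hq.1, hq.2, h⟩
    · exact Or.inr ⟨hq.1, hq.2, h⟩
  have hswap : (((pathBottoms N n k) ×ˢ (pathBottoms N n k)).filter
        (fun q => (Sb k q.1 ∩ Sb k q.2).card = m' ∧ q.2.length ≤ q.1.length)).card
      = (((pathBottoms N n k) ×ˢ (pathBottoms N n k)).filter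
        (fun q => (Sb k q.1 ∩ Sb k q.2).card = m' ∧ q.1.length ≤ q.2.length)).card := by
    apply Finset.card_bij' (fun q _ => Prod.swap q) (fun q _ => Prod.swap q)
    · intro q hq
      rw [Finset.mem_filter, Finset.mem_product] at hq ⊢
      refine ⟨⟨hq.1.2, hq.1.1⟩, ?_, hq.2.2⟩
      rw [Finset.inter_comm]
      exact hq.2.1
    · intro q hq
      rw [Finset.mem_filter, Finset.mem_product] at hq ⊢
      refine ⟨⟨hq.1.2, hq.1.1⟩, ?_, hq.2.2⟩
      rw [Finset.inter_comm]
      exact hq.2.1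
    · intro q _; simp
    · intro q _; simp
  calc (((pathBottoms N n k) ×ˢ (pathBottoms N n k)).filter
      (fun q => (Sb k q.1 ∩ Sb k q.2).card = m')).card
      ≤ _ := Finset.card_le_card hsub
    _ ≤ _ := Finset.card_union_le _ _
    _ ≤ 2 * ((pathBottoms N n k).card * N ^ (k + 1 - m')) := by
        rw [hswap]
        have h1 := count_one_sided (n := n) (k := k) hN m' hm1
        omega

end Stmt10Aux

open Stmt10Aux

/-- Variance bounds for the number `T_{n,k}` of open downward paths of length `k` in the
`N`-ary tree of depth `n`, each vertex being open independently with probability `p`: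
`Var(T_{n,k}) ≤ 2(1-Np)⁻¹ E(T_{n,k})` if `p < 1/N`;
`Var(T_{n,k}) ≤ 2(k+1) E(T_{n,k})` if `p = 1/N`;
`Var(T_{n,k}) ≤ 2 N^{k+1} p^{k+1} (Np-1)⁻¹ E(T_{n,k})` if `p > 1/N`. -/
theorem stmt10 (N n k : ℕ) (hN : 2 ≤ N) (hk : k ≤ n) (p : ℝ) (hp0 : 0 < p) (hp1 : p < 1)
    {Ω : Type} [MeasurableSpace Ω] (μ : Measure Ω) [IsProbabilityMeasure μ]
    (X : List (Fin N) → Ω → Bool)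
    (hmeas : ∀ v, Measurable (X v))
    (hindep : iIndepFun X μ)
    (hBer : ∀ v, μ {ω | X v ω = true} = ENNReal.ofReal p)
    (T : Ω → ℕ)
    (hT : ∀ ω, T ω = ((pathBottoms N n k).filter
        (fun b => ∀ i ∈ Finset.range (k + 1), X (b.drop i) ω = true)).card) :
    (p < 1 / N → variance (fun ω => (T ω : ℝ)) μ
        ≤ 2 * (1 - N * p)⁻¹ * ∫ ω, (T ω : ℝ) ∂μ) ∧
    (p = 1 / N → variance (fun ω => (T ω : ℝ)) μ
        ≤ 2 * (k + 1) * ∫ ω, (T ω : ℝ) ∂μ) ∧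
    (1 / N < p → variance (fun ω => (T ω : ℝ)) μ
        ≤ 2 * (N : ℝ) ^ (k + 1) * p ^ (k + 1) * (N * p - 1)⁻¹ * ∫ ω, (T ω : ℝ) ∂μ) := by
  classical
  have hN0 : (0:ℝ) < N := by
    have : (0:ℕ) < N := by omega
    exact_mod_cast this
  set PB := pathBottoms N n k with hPBdef
  -- measurability of the basic events
  have hmeasE : ∀ S : Finset (List (Fin N)), MeasurableSet {ω | ∀ v ∈ S, X v ω = true} := by
    intro S
    have h1 : {ω | ∀ v ∈ S, X v ω = true} = ⋂ v ∈ S, (X v) ⁻¹' {true} := by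
      ext ω; simp
    rw [h1]
    exact Set.Finite.measurableSet_biInter S.finite_toSet
      (fun v _ => (hmeas v) (MeasurableSet.singleton true))
  -- probability of the basic events
  have hprob : ∀ S : Finset (List (Fin N)),
      μ {ω | ∀ v ∈ S, X v ω = true} = ENNReal.ofReal p ^ S.card := by
    intro S
    have h1 : {ω | ∀ v ∈ S, X v ω = true} = ⋂ v ∈ S, (X v) ⁻¹' {true} := by
      ext ω; simp
    rw [h1, hindep.meas_biInter (fun v _ => ⟨{true}, MeasurableSet.singleton true, rfl⟩)]
    have h2 : ∀ v ∈ S, μ ((X v) ⁻¹' {true}) = ENNReal.ofReal p := by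
      intro v _
      rw [← hBer v]
      rfl
    rw [Finset.prod_congr rfl h2, Finset.prod_const]
  -- indicator functions
  have hind_eq : ∀ S : Finset (List (Fin N)),
      (fun ω => if ∀ v ∈ S, X v ω = true then (1:ℝ) else 0)
        = Set.indicator {ω | ∀ v ∈ S, X v ω = true} (fun _ => (1:ℝ)) := by
    intro S
    funext ω
    by_cases h : ∀ v ∈ S, X v ω = true
    · simp [Set.indicator_apply, Set.mem_setOf_eq, h]
    · simp [Set.indicator_apply, Set.mem_setOf_eq, h]
  have hinteg : ∀ S : Finset (List (Fin N)),
      Integrable (fun ω => if ∀ v ∈ S, X v ω = true then (1:ℝ) else 0) μ := by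
    intro S
    rw [hind_eq S]
    exact (integrable_const (1:ℝ)).indicator (hmeasE S)
  have hint : ∀ S : Finset (List (Fin N)),
      ∫ ω, (if ∀ v ∈ S, X v ω = true then (1:ℝ) else 0) ∂μ = p ^ S.card := by
    intro S
    rw [hind_eq S, integral_indicator_const (1:ℝ) (hmeasE S), measureReal_def, hprob S, smul_eq_mul, mul_one,
      ENNReal.toReal_pow, ENNReal.toReal_ofReal hp0.le]
  -- the sum decomposition of T
  set F : Ω → ℝ := fun ω => ∑ b ∈ PB, (if ∀ v ∈ Sb k b, X v ω = true then (1:ℝ) else 0)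
    with hFdef
  have hTF : (fun ω => (T ω : ℝ)) = F := by
    funext ω
    rw [hT ω, Finset.card_filter]
    push_cast
    apply Finset.sum_congr rfl
    intro b _
    have hiff : (∀ i ∈ Finset.range (k+1), X (b.drop i) ω = true)
        ↔ (∀ v ∈ Sb k b, X v ω = true) := by
      constructor
      · intro h v hv
        obtain ⟨i, hi, rfl⟩ := mem_Sb.mp hv
        exact h i (Finset.mem_range.mpr (by omega))
      · intro h i hi
        exact h _ (mem_Sb.mpr ⟨i, by simpa [Nat.lt_succ_iff] using hi, rfl⟩)
    rw [if_congr hiff rfl rfl]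
  have hlenPB : ∀ b ∈ PB, k ≤ b.length := fun b hb => (mem_pathBottoms.mp hb).1
  have hEF : ∫ ω, F ω ∂μ = (PB.card : ℝ) * p ^ (k+1) := by
    rw [hFdef]
    rw [integral_finset_sum PB (fun b _ => hinteg (Sb k b))]
    rw [Finset.sum_congr rfl (fun b hb => by
      rw [hint (Sb k b), card_Sb (hlenPB b hb)])]
    rw [Finset.sum_const, nsmul_eq_mul]
  have hmem : MemLp F 2 μ := by
    rw [hFdef]
    apply memLp_finset_sum
    intro b _
    rw [hind_eq (Sb k b)]
    exact memLp_indicator_const 2 (hmeasE _) 1 (Or.inr (measure_ne_top μ _))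
  -- second moment
  have hsq : (F ^ 2) = fun ω => ∑ q ∈ PB ×ˢ PB,
      (if ∀ v ∈ Sb k q.1 ∪ Sb k q.2, X v ω = true then (1:ℝ) else 0) := by
    funext ω
    rw [Pi.pow_apply, sq, hFdef]
    rw [Finset.sum_mul_sum]
    rw [Finset.sum_product]
    apply Finset.sum_congr rfl
    intro b _
    apply Finset.sum_congr rfl
    intro b' _
    have hiff : (∀ v ∈ Sb k b ∪ Sb k b', X v ω = true)
        ↔ ((∀ v ∈ Sb k b, X v ω = true) ∧ (∀ v ∈ Sb k b', X v ω = true)) := by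
      constructor
      · intro h
        exact ⟨fun v hv => h v (Finset.mem_union_left _ hv),
          fun v hv => h v (Finset.mem_union_right _ hv)⟩
      · rintro ⟨h1, h2⟩ v hv
        rcases Finset.mem_union.mp hv with h | h
        exacts [h1 v h, h2 v h]
    rcases em (∀ v ∈ Sb k b, X v ω = true) with h1 | h1 <;>
      rcases em (∀ v ∈ Sb k b', X v ω = true) with h2 | h2
    · rw [if_pos h1, if_pos h2, if_pos (hiff.mpr ⟨h1, h2⟩), mul_one]
    · rw [if_pos h1, if_neg h2, if_neg (fun hc => h2 (hiff.mp hc).2), mul_zero]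
    · rw [if_neg h1, if_pos h2, if_neg (fun hc => h1 (hiff.mp hc).1), zero_mul]
    · rw [if_neg h1, if_neg h2, if_neg (fun hc => h1 (hiff.mp hc).1), zero_mul]
  have hF2 : ∫ ω, (F ^ 2) ω ∂μ = ∑ q ∈ PB ×ˢ PB, (p:ℝ) ^ ((Sb k q.1 ∪ Sb k q.2).card) := by
    rw [hsq, integral_finset_sum _ (fun q _ => hinteg _)]
    exact Finset.sum_congr rfl fun q _ => hint _
  have hvar2 : variance F μ
      = ∑ q ∈ PB ×ˢ PB, ((p:ℝ) ^ ((Sb k q.1 ∪ Sb k q.2).card) - p ^ (2*k+2)) := by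
    rw [variance_eq_sub hmem]
    have hmu2 : μ[F ^ 2] = ∑ q ∈ PB ×ˢ PB, (p:ℝ) ^ ((Sb k q.1 ∪ Sb k q.2).card) := hF2
    have hmu1 : μ[F] = (PB.card : ℝ) * p ^ (k+1) := hEF
    rw [hmu2, hmu1, Finset.sum_sub_distrib, Finset.sum_const, Finset.card_product,
      nsmul_eq_mul]
    push_cast
    ring
  -- the central estimate
  have hmain : variance F μ
      ≤ 2 * (PB.card : ℝ) * p ^ (k+1) * ∑ j ∈ Finset.range (k+1), ((N:ℝ)*p) ^ j := by
    rw [hvar2]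
    have step1 : ∑ q ∈ PB ×ˢ PB, ((p:ℝ) ^ ((Sb k q.1 ∪ Sb k q.2).card) - p ^ (2*k+2))
        ≤ ∑ q ∈ PB ×ˢ PB, (if 1 ≤ (Sb k q.1 ∩ Sb k q.2).card
            then (p:ℝ) ^ (2*k+2 - (Sb k q.1 ∩ Sb k q.2).card) else 0) := by
      apply Finset.sum_le_sum
      intro q hq
      rw [Finset.mem_product] at hq
      have h1 : k ≤ q.1.length := hlenPB q.1 hq.1
      have h2 : k ≤ q.2.length := hlenPB q.2 hq.2
      have hu : (Sb k q.1 ∪ Sb k q.2).card + (Sb k q.1 ∩ Sb k q.2).card = 2*k+2 := by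
        rw [Finset.card_union_add_card_inter, card_Sb h1, card_Sb h2]
        ring
      by_cases hm : 1 ≤ (Sb k q.1 ∩ Sb k q.2).card
      · rw [if_pos hm]
        have he : (Sb k q.1 ∪ Sb k q.2).card = 2*k+2 - (Sb k q.1 ∩ Sb k q.2).card := by omega
        rw [he]
        have := pow_nonneg hp0.le (2*k+2)
        linarith
      · rw [if_neg hm]
        have he : (Sb k q.1 ∪ Sb k q.2).card = 2*k+2 := by omega
        rw [he]
        simp
    have step2 : ∑ q ∈ PB ×ˢ PB, (if 1 ≤ (Sb k q.1 ∩ Sb k q.2).card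
            then (p:ℝ) ^ (2*k+2 - (Sb k q.1 ∩ Sb k q.2).card) else 0)
        = ∑ q ∈ (PB ×ˢ PB).filter (fun q => 1 ≤ (Sb k q.1 ∩ Sb k q.2).card),
            (p:ℝ) ^ (2*k+2 - (Sb k q.1 ∩ Sb k q.2).card) :=
      (Finset.sum_filter _ _).symm
    have hmaps : ∀ q ∈ (PB ×ˢ PB).filter (fun q => 1 ≤ (Sb k q.1 ∩ Sb k q.2).card),
        (Sb k q.1 ∩ Sb k q.2).card ∈ Finset.Icc 1 (k+1) := by
      intro q hq
      rw [Finset.mem_filter] at hq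
      rw [Finset.mem_Icc]
      refine ⟨hq.2, ?_⟩
      calc (Sb k q.1 ∩ Sb k q.2).card ≤ (Sb k q.1).card :=
            Finset.card_le_card Finset.inter_subset_left
        _ ≤ k + 1 := card_Sb_le q.1
    have step3 : ∑ q ∈ (PB ×ˢ PB).filter (fun q => 1 ≤ (Sb k q.1 ∩ Sb k q.2).card),
            (p:ℝ) ^ (2*k+2 - (Sb k q.1 ∩ Sb k q.2).card)
        = ∑ m' ∈ Finset.Icc 1 (k+1),
            ∑ q ∈ ((PB ×ˢ PB).filter (fun q => 1 ≤ (Sb k q.1 ∩ Sb k q.2).card)).filter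
              (fun q => (Sb k q.1 ∩ Sb k q.2).card = m'),
            (p:ℝ) ^ (2*k+2 - (Sb k q.1 ∩ Sb k q.2).card) :=
      (Finset.sum_fiberwise_of_maps_to hmaps _).symm
    have step4 : ∀ m' ∈ Finset.Icc 1 (k+1),
        ∑ q ∈ ((PB ×ˢ PB).filter (fun q => 1 ≤ (Sb k q.1 ∩ Sb k q.2).card)).filter
              (fun q => (Sb k q.1 ∩ Sb k q.2).card = m'),
            (p:ℝ) ^ (2*k+2 - (Sb k q.1 ∩ Sb k q.2).card)
        ≤ (2 * ((PB.card : ℝ) * (N:ℝ) ^ (k+1-m'))) * p ^ (2*k+2-m') := by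
      intro m' hm'
      rw [Finset.mem_Icc] at hm'
      have hconst : ∀ q ∈ ((PB ×ˢ PB).filter (fun q => 1 ≤ (Sb k q.1 ∩ Sb k q.2).card)).filter
              (fun q => (Sb k q.1 ∩ Sb k q.2).card = m'),
          (p:ℝ) ^ (2*k+2 - (Sb k q.1 ∩ Sb k q.2).card) = (p:ℝ) ^ (2*k+2 - m') := by
        intro q hq
        rw [Finset.mem_filter] at hq
        rw [hq.2]
      rw [Finset.sum_congr rfl hconst, Finset.sum_const, nsmul_eq_mul]
      apply mul_le_mul_of_nonneg_right _ (pow_nonneg hp0.le _)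
      have hcardle : (((PB ×ˢ PB).filter (fun q => 1 ≤ (Sb k q.1 ∩ Sb k q.2).card)).filter
              (fun q => (Sb k q.1 ∩ Sb k q.2).card = m')).card
          ≤ ((PB ×ˢ PB).filter (fun q => (Sb k q.1 ∩ Sb k q.2).card = m')).card := by
        apply Finset.card_le_card
        intro q hq
        rw [Finset.mem_filter] at hq ⊢
        exact ⟨(Finset.mem_filter.mp hq.1).1, hq.2⟩
      have hcount := count_pairs (n := n) (k := k) hN m' hm'.1
      have hle2 : (((PB ×ˢ PB).filter (fun q => 1 ≤ (Sb k q.1 ∩ Sb k q.2).card)).filter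
              (fun q => (Sb k q.1 ∩ Sb k q.2).card = m')).card
          ≤ 2 * (PB.card * N ^ (k+1-m')) := le_trans hcardle hcount
      calc ((((PB ×ˢ PB).filter (fun q => 1 ≤ (Sb k q.1 ∩ Sb k q.2).card)).filter
              (fun q => (Sb k q.1 ∩ Sb k q.2).card = m')).card : ℝ)
          ≤ ((2 * (PB.card * N ^ (k+1-m')) : ℕ) : ℝ) := by exact_mod_cast hle2
        _ = 2 * ((PB.card : ℝ) * (N:ℝ) ^ (k+1-m')) := by push_cast; ring
    have step5 : ∑ m' ∈ Finset.Icc 1 (k+1),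
          (2 * ((PB.card : ℝ) * (N:ℝ) ^ (k+1-m'))) * p ^ (2*k+2-m')
        = 2 * (PB.card : ℝ) * p ^ (k+1) * ∑ j ∈ Finset.range (k+1), ((N:ℝ)*p) ^ j := by
      rw [Finset.mul_sum]
      apply Finset.sum_bij' (i := fun m' _ => k + 1 - m') (j := fun j _ => k + 1 - j)
      · intro a ha
        rw [Finset.mem_Icc] at ha
        rw [Finset.mem_range]
        omega
      · intro a ha
        rw [Finset.mem_range] at ha
        rw [Finset.mem_Icc]
        omega
      · intro a ha
        rw [Finset.mem_Icc] at ha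
        omega
      · intro a ha
        rw [Finset.mem_range] at ha
        omega
      · intro m' hm'
        rw [Finset.mem_Icc] at hm'
        rw [show 2*k+2-m' = (k+1) + (k+1-m') by omega, pow_add, mul_pow]
        ring
    calc ∑ q ∈ PB ×ˢ PB, ((p:ℝ) ^ ((Sb k q.1 ∪ Sb k q.2).card) - p ^ (2*k+2))
        ≤ _ := step1
      _ = _ := step2
      _ = _ := step3
      _ ≤ ∑ m' ∈ Finset.Icc 1 (k+1),
            (2 * ((PB.card : ℝ) * (N:ℝ) ^ (k+1-m'))) * p ^ (2*k+2-m') :=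
          Finset.sum_le_sum step4
      _ = _ := step5
  -- finish: three cases
  rw [hTF]
  have hE0 : (0:ℝ) ≤ (PB.card : ℝ) * p ^ (k+1) := by positivity
  have hNne : (N:ℝ) ≠ 0 := ne_of_gt hN0
  refine ⟨?_, ?_, ?_⟩
  · intro hp
    have hx1 : (N:ℝ) * p < 1 := by
      have h := mul_lt_mul_of_pos_left hp hN0
      rwa [mul_one_div, div_self hNne] at h
    have hx0 : (0:ℝ) ≤ (N:ℝ) * p := by positivity
    have h1x : (0:ℝ) < 1 - (N:ℝ)*p := by linarith
    have hG : ∑ j ∈ Finset.range (k+1), ((N:ℝ)*p) ^ j ≤ (1 - (N:ℝ)*p)⁻¹ := by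
      have hgm := geom_sum_mul ((N:ℝ)*p) (k+1)
      rw [inv_eq_one_div, le_div_iff₀ h1x]
      nlinarith [pow_nonneg hx0 (k+1)]
    calc variance F μ ≤ 2 * (PB.card : ℝ) * p ^ (k+1)
          * ∑ j ∈ Finset.range (k+1), ((N:ℝ)*p) ^ j := hmain
      _ ≤ 2 * (PB.card : ℝ) * p ^ (k+1) * (1 - (N:ℝ)*p)⁻¹ := by
          apply mul_le_mul_of_nonneg_left hG
          positivity
      _ = 2 * (1 - (N:ℝ)*p)⁻¹ * ((PB.card : ℝ) * p ^ (k+1)) := by ring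
      _ = 2 * (1 - (N:ℝ)*p)⁻¹ * ∫ ω, F ω ∂μ := by rw [hEF]
  · intro hp
    have hx1 : (N:ℝ) * p = 1 := by
      rw [hp, mul_one_div, div_self hNne]
    have hG : ∑ j ∈ Finset.range (k+1), ((N:ℝ)*p) ^ j = (k:ℝ)+1 := by
      rw [hx1]
      simp
    calc variance F μ ≤ 2 * (PB.card : ℝ) * p ^ (k+1)
          * ∑ j ∈ Finset.range (k+1), ((N:ℝ)*p) ^ j := hmain
      _ = 2 * ((k:ℝ)+1) * ((PB.card : ℝ) * p ^ (k+1)) := by rw [hG]; ring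
      _ = 2 * ((k:ℝ)+1) * ∫ ω, F ω ∂μ := by rw [hEF]
  · intro hp
    have hx1 : 1 < (N:ℝ) * p := by
      have h := mul_lt_mul_of_pos_left hp hN0
      rwa [mul_one_div, div_self hNne] at h
    have hx0 : (0:ℝ) ≤ (N:ℝ) * p := by positivity
    have h1x : (0:ℝ) < (N:ℝ)*p - 1 := by linarith
    have hG : ∑ j ∈ Finset.range (k+1), ((N:ℝ)*p) ^ j
        ≤ ((N:ℝ)*p) ^ (k+1) * ((N:ℝ)*p - 1)⁻¹ := by
      have hgm := geom_sum_mul ((N:ℝ)*p) (k+1)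
      rw [← div_eq_mul_inv, le_div_iff₀ h1x]
      nlinarith
    calc variance F μ ≤ 2 * (PB.card : ℝ) * p ^ (k+1)
          * ∑ j ∈ Finset.range (k+1), ((N:ℝ)*p) ^ j := hmain
      _ ≤ 2 * (PB.card : ℝ) * p ^ (k+1) * (((N:ℝ)*p) ^ (k+1) * ((N:ℝ)*p - 1)⁻¹) := by
          apply mul_le_mul_of_nonneg_left hG
          positivity
      _ = 2 * (N : ℝ) ^ (k + 1) * p ^ (k + 1) * ((N:ℝ) * p - 1)⁻¹
          * ((PB.card : ℝ) * p ^ (k+1)) := by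
          rw [mul_pow]
          ring
      _ = 2 * (N : ℝ) ^ (k + 1) * p ^ (k + 1) * ((N:ℝ) * p - 1)⁻¹ * ∫ ω, F ω ∂μ := by
          rw [hEF]
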